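/- For k = 0, 1, 2, ..., let p_k(x) = √((k+1)/π) x^k, and for n ∈ ℕ and x ∈ ℝ define K_n(x) = Σ_{k=0}^n p_k(x)², K01_n(x) = Σ_{k=0}^n p_k(x) p_k'(x), K11_n(x) = Σ_{k=0}^n p_k'(x)², and 𝒦_n(x) = √(K11_n(x) K_n(x) − K01_n(x)²) / K_n(x). Then for every x ∈ ℝ with |x| > 1, the limit as n → ∞ of 𝒦_n(x) equals 1/(x² − 1). -/

import Mathlib

open Finset Real Filter
open Topology

noncomputable def bergPoly (k : ℕ) (x : ℝ) : ℝ :=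
  Real.sqrt ((k + 1) / π) * x ^ k

noncomputable def bergK (n : ℕ) (x : ℝ) : ℝ :=
  ∑ k ∈ Finset.range (n + 1), (bergPoly k x) ^ 2

noncomputable def bergK01 (n : ℕ) (x : ℝ) : ℝ :=
  ∑ k ∈ Finset.range (n + 1), bergPoly k x * deriv (bergPoly k) x

noncomputable def bergK11 (n : ℕ) (x : ℝ) : ℝ :=
  ∑ k ∈ Finset.range (n + 1), (deriv (bergPoly k) x) ^ 2

noncomputable def bergKcal (n : ℕ) (x : ℝ) : ℝ :=
  Real.sqrt (bergK11 n x * bergK n x - (bergK01 n x) ^ 2) / bergK n x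

lemma berg_deriv (k : ℕ) (x : ℝ) :
    deriv (bergPoly k) x = Real.sqrt ((k + 1) / π) * (k * x ^ (k - 1)) := by
  have : bergPoly k = fun y => Real.sqrt ((k + 1) / π) * y ^ k := rfl
  rw [this, deriv_const_mul_field, deriv_pow_field]

lemma choose2 (n : ℕ) : 2 * (n+2).choose 2 = (n+1)*(n+2) := by
  induction n with
  | zero => rfl
  | succ m ih =>
      have h : (m+3).choose 2 = (m+2).choose 2 + (m+2).choose 1 := by
        rw [Nat.choose_succ_succ, Nat.add_comm]
      rw [show m+1+2 = m+3 from rfl, h, Nat.choose_one_right, Nat.mul_add, ih]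
      ring

lemma choose3 (n : ℕ) : 6 * (n+3).choose 3 = (n+1)*(n+2)*(n+3) := by
  induction n with
  | zero => rfl
  | succ m ih =>
      have h : (m+4).choose 3 = (m+3).choose 3 + (m+3).choose 2 := by
        rw [Nat.choose_succ_succ, Nat.add_comm]
      rw [show m+1+3 = m+4 from rfl, h, Nat.mul_add, ih]
      have h3 : 6 * (m+3).choose 2 = 3 * ((m+2)*(m+3)) := by
        rw [show (6:ℕ) = 3*2 from rfl, Nat.mul_assoc, show m+3 = (m+1)+2 from rfl, choose2]
      rw [h3]; ring

lemma cast2 (n : ℕ) : ((n+2).choose 2 : ℝ) = ((n:ℝ)+1)*((n:ℝ)+2)/2 := by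
  have := choose2 n
  have : (2:ℝ) * ((n+2).choose 2 : ℝ) = ((n:ℝ)+1)*((n:ℝ)+2) := by exact_mod_cast congrArg (Nat.cast : ℕ → ℝ) this
  linarith

lemma cast3 (n : ℕ) : ((n+3).choose 3 : ℝ) = ((n:ℝ)+1)*((n:ℝ)+2)*((n:ℝ)+3)/6 := by
  have := choose3 n
  have : (6:ℝ) * ((n+3).choose 3 : ℝ) = ((n:ℝ)+1)*((n:ℝ)+2)*((n:ℝ)+3) := by
    exact_mod_cast congrArg (Nat.cast : ℕ → ℝ) this
  linarith

lemma hasSumB {r : ℝ} (h0 : 0 ≤ r) (h1 : r < 1) :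
    HasSum (fun n : ℕ => (n:ℝ) * r^n) (1/(1-r)^2 - (1-r)⁻¹) := by
  have hr : ‖r‖ < 1 := by rwa [Real.norm_eq_abs, abs_of_nonneg h0]
  have hc1 := hasSum_choose_mul_geometric_of_norm_lt_one 1 hr
  have hg := hasSum_geometric_of_lt_one h0 h1
  have h := hc1.sub hg
  have hf : (fun n : ℕ => ((n+1).choose 1 : ℝ) * r^n - r^n) = fun n : ℕ => (n:ℝ) * r^n := by
    funext n; rw [Nat.choose_one_right]; push_cast; ring
  rwa [hf] at h

lemma hasSumC {r : ℝ} (h0 : 0 ≤ r) (h1 : r < 1) :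
    HasSum (fun n : ℕ => (n:ℝ)^2 * r^n)
      (2*(1/(1-r)^3) - 3*(1/(1-r)^2) + (1-r)⁻¹) := by
  have hr : ‖r‖ < 1 := by rwa [Real.norm_eq_abs, abs_of_nonneg h0]
  have h2 := hasSum_choose_mul_geometric_of_norm_lt_one 2 hr
  have hc1 := hasSum_choose_mul_geometric_of_norm_lt_one 1 hr
  have hg := hasSum_geometric_of_lt_one h0 h1
  have h := ((h2.mul_left 2).sub (hc1.mul_left 3)).add hg
  have hf : (fun n : ℕ => (2 * (((n+2).choose 2 : ℝ) * r^n) - 3 * (((n+1).choose 1 : ℝ) * r^n)) + r^n)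
      = fun n : ℕ => (n:ℝ)^2 * r^n := by
    funext n; rw [Nat.choose_one_right, cast2]; push_cast; ring
  rw [hf] at h
  exact h
lemma hasSumD {r : ℝ} (h0 : 0 ≤ r) (h1 : r < 1) :
    HasSum (fun n : ℕ => (n:ℝ)^3 * r^n)
      (6*(1/(1-r)^4) - 12*(1/(1-r)^3) + 7*(1/(1-r)^2) - (1-r)⁻¹) := by
  have hr : ‖r‖ < 1 := by rwa [Real.norm_eq_abs, abs_of_nonneg h0]
  have h3 := hasSum_choose_mul_geometric_of_norm_lt_one 3 hr
  have h2 := hasSum_choose_mul_geometric_of_norm_lt_one 2 hr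
  have hc1 := hasSum_choose_mul_geometric_of_norm_lt_one 1 hr
  have hg := hasSum_geometric_of_lt_one h0 h1
  have h := (((h3.mul_left 6).sub (h2.mul_left 12)).add (hc1.mul_left 7)).sub hg
  have hf : (fun n : ℕ => ((6 * (((n+3).choose 3 : ℝ) * r^n) - 12 * (((n+2).choose 2 : ℝ) * r^n))
        + 7 * (((n+1).choose 1 : ℝ) * r^n)) - r^n)
      = fun n : ℕ => (n:ℝ)^3 * r^n := by
    funext n; rw [Nat.choose_one_right, cast2, cast3]; push_cast; ring
  rw [hf] at h
  exact h

theorem stmt_18 (x : ℝ) (hx : 1 < |x|) :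
    Tendsto (fun n : ℕ => bergKcal n x) atTop (nhds (1 / (x ^ 2 - 1))) := by
  have hπ : (0:ℝ) < π := Real.pi_pos
  have hx0 : x ≠ 0 := by
    intro h; rw [h] at hx; simp at hx; linarith
  set t : ℝ := x^2 with ht_def
  have ht1 : 1 < t := by
    have h : |x|^2 = t := by rw [sq_abs]
    nlinarith [abs_nonneg x]
  have ht0 : 0 < t := lt_trans one_pos ht1
  set r : ℝ := t⁻¹ with hr_def
  have hr0 : 0 < r := inv_pos.mpr ht0
  have hr1 : r < 1 := by
    rw [hr_def]; exact inv_lt_one_of_one_lt₀ ht1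
  have h1r : 0 < 1 - r := by linarith
  -- sequences
  set a : ℕ → ℝ := fun m => ∑ j ∈ Finset.range (m+1), r^j with ha_def
  set b : ℕ → ℝ := fun m => ∑ j ∈ Finset.range (m+1), (j:ℝ) * r^j with hb_def
  set c : ℕ → ℝ := fun m => ∑ j ∈ Finset.range (m+1), (j:ℝ)^2 * r^j with hc_def
  set d : ℕ → ℝ := fun m => ∑ j ∈ Finset.range (m+1), (j:ℝ)^3 * r^j with hd_def
  -- reflection
  have hrefl : ∀ (f : ℕ → ℝ) (n : ℕ),
      ∑ k ∈ Finset.range (n+1), f k * t^k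
        = t^n * ∑ j ∈ Finset.range (n+1), f (n-j) * r^j := by
    intro f n
    rw [← Finset.sum_range_reflect (fun k => f k * t^k) (n+1), Finset.mul_sum]
    refine Finset.sum_congr rfl fun j hj => ?_
    have hj' : j ≤ n := Nat.lt_succ_iff.mp (Finset.mem_range.mp hj)
    simp only [Nat.add_sub_cancel]
    have hpow : t^n * r^j = t^(n-j) := by
      have htj : (t:ℝ)^j ≠ 0 := pow_ne_zero _ (ne_of_gt ht0)
      rw [hr_def, inv_pow]
      field_simp
      rw [← pow_add, Nat.add_sub_of_le hj']
    rw [← hpow]; ring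
  -- combination values
  have hval : ∀ (n : ℕ) (p q u v : ℝ),
      ∑ j ∈ Finset.range (n+1), (p + q*(j:ℝ) + u*(j:ℝ)^2 + v*(j:ℝ)^3) * r^j
        = p * a n + q * b n + u * c n + v * d n := by
    intro n p q u v
    rw [ha_def, hb_def, hc_def, hd_def]
    simp only
    rw [Finset.mul_sum, Finset.mul_sum, Finset.mul_sum, Finset.mul_sum,
      ← Finset.sum_add_distrib, ← Finset.sum_add_distrib, ← Finset.sum_add_distrib]
    exact Finset.sum_congr rfl fun j _ => by ring
  have hS0 : ∀ n : ℕ, ∑ k ∈ Finset.range (n+1), ((k:ℝ)+1) * t^k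
      = t^n * (((n:ℝ)+1) * a n - b n) := by
    intro n
    rw [hrefl (fun k => ((k:ℝ)+1)) n]
    congr 1
    have e : ((n:ℝ)+1) * a n - b n
        = ((n:ℝ)+1) * a n + (-1) * b n + 0 * c n + 0 * d n := by ring
    rw [e, ← hval n (((n:ℝ)+1)) (-1) 0 0]
    refine Finset.sum_congr rfl fun j hj => ?_
    have hj' : j ≤ n := Nat.lt_succ_iff.mp (Finset.mem_range.mp hj)
    rw [Nat.cast_sub hj']
    ring
  have hS1 : ∀ n : ℕ, ∑ k ∈ Finset.range (n+1), (((k:ℝ)+1) * (k:ℝ)) * t^k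
      = t^n * (((n:ℝ)*((n:ℝ)+1)) * a n + (-(2*(n:ℝ)+1)) * b n + 1 * c n + 0 * d n) := by
    intro n
    rw [hrefl (fun k => ((k:ℝ)+1) * (k:ℝ)) n]
    congr 1
    rw [← hval n ((n:ℝ)*((n:ℝ)+1)) (-(2*(n:ℝ)+1)) 1 0]
    refine Finset.sum_congr rfl fun j hj => ?_
    have hj' : j ≤ n := Nat.lt_succ_iff.mp (Finset.mem_range.mp hj)
    rw [Nat.cast_sub hj']
    ring
  have hS2 : ∀ n : ℕ, ∑ k ∈ Finset.range (n+1), (((k:ℝ)+1) * (k:ℝ)^2) * t^k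
      = t^n * (((n:ℝ)^2*((n:ℝ)+1)) * a n + (-(3*(n:ℝ)^2+2*(n:ℝ))) * b n
          + (3*(n:ℝ)+1) * c n + (-1) * d n) := by
    intro n
    rw [hrefl (fun k => ((k:ℝ)+1) * (k:ℝ)^2) n]
    congr 1
    rw [← hval n ((n:ℝ)^2*((n:ℝ)+1)) (-(3*(n:ℝ)^2+2*(n:ℝ))) (3*(n:ℝ)+1) (-1)]
    refine Finset.sum_congr rfl fun j hj => ?_
    have hj' : j ≤ n := Nat.lt_succ_iff.mp (Finset.mem_range.mp hj)
    rw [Nat.cast_sub hj']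
    ring
  -- kernel identities
  have hssπ : ∀ k : ℕ, Real.sqrt (((k:ℝ)+1)/π) * Real.sqrt (((k:ℝ)+1)/π) * π = (k:ℝ)+1 := by
    intro k
    rw [Real.mul_self_sqrt (by positivity)]
    field_simp
  have hK : ∀ n : ℕ, bergK n x = (∑ k ∈ Finset.range (n+1), ((k:ℝ)+1) * t^k) / π := by
    intro n
    rw [bergK, Finset.sum_div]
    refine Finset.sum_congr rfl fun k _ => ?_
    rw [bergPoly, eq_div_iff hπ.ne']
    have hx2k : (x^k)^2 = t^k := by
      rw [ht_def, ← pow_mul, ← pow_mul]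
      congr 1
      ring
    linear_combination ((x^k)^2) * hssπ k + ((k:ℝ)+1) * hx2k
  have hK01 : ∀ n : ℕ, bergK01 n x
      = (∑ k ∈ Finset.range (n+1), (((k:ℝ)+1) * (k:ℝ)) * t^k) / (π * x) := by
    intro n
    rw [bergK01, Finset.sum_div]
    refine Finset.sum_congr rfl fun k _ => ?_
    rw [bergPoly, berg_deriv, eq_div_iff (by positivity : π * x ≠ 0)]
    have hkey : (k:ℝ) * (x^k * x^(k-1)) * x = (k:ℝ) * t^k := by
      cases k with
      | zero => simp
      | succ l =>
          simp only [Nat.add_sub_cancel]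
          have h : x^(l+1) * x^l * x = t^(l+1) := by
            rw [ht_def, ← pow_add, ← pow_succ, ← pow_mul]
            congr 1
            omega
          push_cast
          linear_combination ((l:ℝ)+1) * h
    linear_combination ((k:ℝ) * (x^k * x^(k-1)) * x) * hssπ k + ((k:ℝ)+1) * hkey
  have hK11 : ∀ n : ℕ, bergK11 n x
      = (∑ k ∈ Finset.range (n+1), (((k:ℝ)+1) * (k:ℝ)^2) * t^k) / (π * t) := by
    intro n
    rw [bergK11, Finset.sum_div]
    refine Finset.sum_congr rfl fun k _ => ?_
    rw [berg_deriv, eq_div_iff (by positivity : π * t ≠ 0)]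
    have hkey : (k:ℝ)^2 * ((x^(k-1))^2 * t) = (k:ℝ)^2 * t^k := by
      cases k with
      | zero => simp
      | succ l =>
          simp only [Nat.add_sub_cancel]
          have h : (x^l)^2 * x^2 = t^(l+1) := by
            rw [ht_def, ← pow_mul, ← pow_mul, ← pow_add]
            congr 1
            omega
          push_cast
          linear_combination ((l:ℝ)+1)^2 * h
    linear_combination ((k:ℝ)^2 * (x^(k-1))^2 * t) * hssπ k + ((k:ℝ)+1) * hkey
  -- G and sigma
  set G : ℕ → ℝ := fun n => (a n * c n - b n * b n) * (n:ℝ)^2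
      + (2*(a n * c n - b n * b n) + b n * c n - a n * d n) * (n:ℝ)
      + (a n * c n - b n * b n + b n * c n - a n * d n + b n * d n - c n * c n) with hG_def
  set σ : ℕ → ℝ := fun n => ((n:ℝ)+1) * a n - b n with hσ_def
  have hE : ∀ n : ℕ,
      (∑ k ∈ Finset.range (n+1), (((k:ℝ)+1) * (k:ℝ)^2) * t^k)
        * (∑ k ∈ Finset.range (n+1), ((k:ℝ)+1) * t^k)
      - (∑ k ∈ Finset.range (n+1), (((k:ℝ)+1) * (k:ℝ)) * t^k)^2
      = (t^n)^2 * G n := by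
    intro n
    rw [hS0, hS1, hS2, hG_def]
    ring
  -- positivity
  have hS0pos : ∀ n : ℕ, 0 < ∑ k ∈ Finset.range (n+1), ((k:ℝ)+1) * t^k := by
    intro n
    apply Finset.sum_pos
    · intro k _
      positivity
    · exact Finset.nonempty_range_add_one
  have hσpos : ∀ n : ℕ, 0 < σ n := by
    intro n
    have h := hS0 n
    have htn : (0:ℝ) < t^n := pow_pos ht0 n
    have hσn : σ n = ((n:ℝ)+1) * a n - b n := by rw [hσ_def]
    rw [← hσn] at h
    have h2 : 0 < t^n * σ n := h ▸ hS0pos n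
    rcases mul_pos_iff.mp h2 with ⟨_,h3⟩|⟨h3,_⟩
    · exact h3
    · linarith
  -- the key rewrite of bergKcal
  have hst : Real.sqrt t ≠ 0 := by positivity
  have key : ∀ n : ℕ, bergKcal n x
      = Real.sqrt (G n / ((n:ℝ)+1)^2) / (Real.sqrt t * (σ n / ((n:ℝ)+1))) := by
    intro n
    have hn1 : ((n:ℝ)+1) ≠ 0 := by positivity
    have htn : (0:ℝ) < t^n := pow_pos ht0 n
    rw [bergKcal, hK n, hK01 n, hK11 n]
    have hsq : Real.sqrt t * Real.sqrt t = t := Real.mul_self_sqrt ht0.le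
    have hin : (∑ k ∈ Finset.range (n+1), (((k:ℝ)+1) * (k:ℝ)^2) * t^k) / (π*t)
          * ((∑ k ∈ Finset.range (n+1), ((k:ℝ)+1) * t^k) / π)
        - ((∑ k ∈ Finset.range (n+1), (((k:ℝ)+1) * (k:ℝ)) * t^k) / (π*x))^2
        = (t^n / (π * Real.sqrt t))^2 * G n := by
      have h1 : (t^n / (π * Real.sqrt t))^2 * G n = ((t^n)^2 * G n) / (π^2*t) := by
        rw [div_pow, mul_pow, Real.sq_sqrt ht0.le, div_mul_eq_mul_div]
      rw [h1, ← hE n]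
      field_simp
      ring
    rw [hin, Real.sqrt_mul (sq_nonneg _) (G n),
      Real.sqrt_sq (by positivity : (0:ℝ) ≤ t^n/(π*Real.sqrt t)), hS0 n]
    have hσn : σ n = ((n:ℝ)+1) * a n - b n := by rw [hσ_def]
    have e2 : G n / ((n:ℝ)+1)^2 = G n * ((((n:ℝ)+1)⁻¹)^2) := by
      rw [div_eq_mul_inv, ← inv_pow]
    rw [e2, Real.sqrt_mul' _ (sq_nonneg _), Real.sqrt_sq (by positivity : (0:ℝ) ≤ ((n:ℝ)+1)⁻¹),
      ← hσn]
    have hσ0 : σ n ≠ 0 := (hσpos n).ne'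
    have lhs : t ^ n / (π * Real.sqrt t) * Real.sqrt (G n) / (t ^ n * σ n / π)
        = Real.sqrt (G n) / (Real.sqrt t * σ n) := by
      field_simp
    have rhs : Real.sqrt (G n) * ((n:ℝ) + 1)⁻¹ / (Real.sqrt t * (σ n / ((n:ℝ) + 1)))
        = Real.sqrt (G n) / (Real.sqrt t * σ n) := by
      field_simp
    exact lhs.trans rhs.symm
  -- limits of a b c d
  have hA : Tendsto a atTop (𝓝 ((1-r)⁻¹)) := by
    rw [ha_def]
    exact (hasSum_geometric_of_lt_one hr0.le hr1).tendsto_sum_nat.comp (tendsto_add_atTop_nat 1)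
  have hB : Tendsto b atTop (𝓝 (1/(1-r)^2 - (1-r)⁻¹)) := by
    rw [hb_def]
    exact (hasSumB hr0.le hr1).tendsto_sum_nat.comp (tendsto_add_atTop_nat 1)
  have hC : Tendsto c atTop (𝓝 (2*(1/(1-r)^3) - 3*(1/(1-r)^2) + (1-r)⁻¹)) := by
    rw [hc_def]
    exact (hasSumC hr0.le hr1).tendsto_sum_nat.comp (tendsto_add_atTop_nat 1)
  have hD : Tendsto d atTop (𝓝 (6*(1/(1-r)^4) - 12*(1/(1-r)^3) + 7*(1/(1-r)^2) - (1-r)⁻¹)) := by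
    rw [hd_def]
    exact (hasSumD hr0.le hr1).tendsto_sum_nat.comp (tendsto_add_atTop_nat 1)
  have hq0 : Tendsto (fun n : ℕ => ((n:ℝ)+1)⁻¹) atTop (𝓝 0) := by
    simpa only [one_div] using tendsto_one_div_add_atTop_nhds_zero_nat (𝕜 := ℝ)
  have hq1 : Tendsto (fun n : ℕ => (n:ℝ)/((n:ℝ)+1)) atTop (𝓝 1) := by
    have h := (tendsto_const_nhds (x := (1:ℝ)) (f := atTop)).sub hq0
    rw [sub_zero] at h
    refine h.congr fun n => ?_
    have hn1 : ((n:ℝ)+1) ≠ 0 := by positivity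
    field_simp
    ring
  -- limit of G n / (n+1)^2
  have hACB := (hA.mul hC).sub (hB.mul hB)
  have hGq : Tendsto (fun n : ℕ => G n / ((n:ℝ)+1)^2) atTop
      (𝓝 ((1-r)⁻¹ * (2*(1/(1-r)^3) - 3*(1/(1-r)^2) + (1-r)⁻¹)
        - (1/(1-r)^2 - (1-r)⁻¹) * (1/(1-r)^2 - (1-r)⁻¹))) := by
    have hfun : ∀ n : ℕ, (a n * c n - b n * b n) * ((n:ℝ)/((n:ℝ)+1) * ((n:ℝ)/((n:ℝ)+1)))
          + (2*(a n * c n - b n * b n) + (b n * c n - a n * d n)) * ((n:ℝ)/((n:ℝ)+1) * ((n:ℝ)+1)⁻¹)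
          + ((a n * c n - b n * b n + b n * c n - a n * d n) + (b n * d n - c n * c n))
              * (((n:ℝ)+1)⁻¹ * ((n:ℝ)+1)⁻¹)
        = G n / ((n:ℝ)+1)^2 := by
      intro n
      rw [hG_def]
      have hn1 : ((n:ℝ)+1) ≠ 0 := by positivity
      field_simp
      ring
    have hc1 := ((tendsto_const_nhds (x := (2:ℝ)) (f := atTop)).mul hACB).add
      ((hB.mul hC).sub (hA.mul hD))
    have hc0 := ((hACB.add (hB.mul hC)).sub (hA.mul hD)).add ((hB.mul hD).sub (hC.mul hC))
    have hten := ((hACB.mul (hq1.mul hq1)).add (hc1.mul (hq1.mul hq0))).add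
      (hc0.mul (hq0.mul hq0))
    have hten2 := hten.congr hfun
    convert hten2 using 2
    ring
  -- limit of σ n / (n+1)
  have hσq : Tendsto (fun n : ℕ => σ n / ((n:ℝ)+1)) atTop (𝓝 ((1-r)⁻¹)) := by
    have hfun : ∀ n : ℕ, a n - b n * ((n:ℝ)+1)⁻¹ = σ n / ((n:ℝ)+1) := by
      intro n
      rw [hσ_def]
      have hn1 : ((n:ℝ)+1) ≠ 0 := by positivity
      field_simp
    have hten := hA.sub (hB.mul hq0)
    rw [mul_zero, sub_zero] at hten
    exact hten.congr hfun
  -- final assembly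
  have hsqt : Real.sqrt t * Real.sqrt t = t := Real.mul_self_sqrt ht0.le
  have hden0 : Real.sqrt t * (1-r)⁻¹ ≠ 0 := by positivity
  have hfinal := (hGq.sqrt).div
    ((tendsto_const_nhds (x := Real.sqrt t) (f := atTop)).mul hσq) hden0
  have hberg := hfinal.congr (fun n => (key n).symm)
  have e1 : (1-r)⁻¹ * (2*(1/(1-r)^3) - 3*(1/(1-r)^2) + (1-r)⁻¹)
      - (1/(1-r)^2 - (1-r)⁻¹) * (1/(1-r)^2 - (1-r)⁻¹) = r/(1-r)^4 := by
    field_simp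
    ring
  rw [e1] at hberg
  have e2 : r/(1-r)^4 = (Real.sqrt r/(1-r)^2)^2 := by
    rw [div_pow, Real.sq_sqrt hr0.le, ← pow_mul]
  rw [e2, Real.sqrt_sq (by positivity)] at hberg
  have e3 : Real.sqrt r / (1-r)^2 / (Real.sqrt t * (1-r)⁻¹) = 1/(t-1) := by
    have ht1' : t - 1 ≠ 0 := by nlinarith
    have hrr : Real.sqrt r = (Real.sqrt t)⁻¹ := by rw [hr_def, Real.sqrt_inv]
    rw [hrr, eq_div_iff ht1']
    have h1rne : (1:ℝ) - r ≠ 0 := h1r.ne'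
    have hrt : r * t = 1 := by rw [hr_def]; field_simp
    clear_value r t
    field_simp
    linear_combination (r - 1) * hsqt + hrt
  rw [e3] at hberg
  exact hberg
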